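/- Let ε > 0, θ ∈ (0,π/2), and U = U_{θ,1} be the solution of U'' = (1+(U')²)^{5/4}√(√(1+(U')²)−1), U(0)=0, U'(0)=tan θ on (−∞,0]. Then ∫_{−ε^{−1/3}}^{0} [ (U''/(1+(U')²)^{3/2})² √(1+(U')²) + (√(1+(U')²) − 1) ] dx = f(U'(0)) − f(U'(−ε^{−1/3})), where f(y) = ∫₀^y 2√(√(1+z²)−1)/(1+z²)^{5/4} dz; consequently this quantity converges to 4(√2 − √(1+cos θ)) as ε ↓ 0. -/

import Mathlib

open Real Set Filter MeasureTheory intervalIntegral Topology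

/-- `U` solves the profile equation `U'' = (1+(U')²)^{5/4}√(√(1+(U')²)−1)` on `(−∞,0]`
with `U(0)=0`, `U'(0)=tan θ`. -/
def IsProfileSol1 (θ : ℝ) (U : ℝ → ℝ) : Prop :=
  (∀ x ≤ (0:ℝ), DifferentiableAt ℝ U x ∧ DifferentiableAt ℝ (deriv U) x) ∧
  U 0 = 0 ∧ deriv U 0 = Real.tan θ ∧
  ∀ x ≤ (0:ℝ), deriv (deriv U) x =
    (1 + (deriv U x) ^ 2) ^ ((5:ℝ)/4) *
      Real.sqrt (Real.sqrt (1 + (deriv U x) ^ 2) - 1)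

/-- The right-hand side of the profile ODE. -/
noncomputable def Ffun (t : ℝ) : ℝ :=
  (1 + t ^ 2) ^ ((5:ℝ)/4) * Real.sqrt (Real.sqrt (1 + t ^ 2) - 1)

/-- The integrand defining `f`. -/
noncomputable def gfun (t : ℝ) : ℝ :=
  2 * Real.sqrt (Real.sqrt (1 + t ^ 2) - 1) / (1 + t ^ 2) ^ ((5:ℝ)/4)

lemma one_le_A (t : ℝ) : 1 ≤ 1 + t ^ 2 := by nlinarith [sq_nonneg t]

lemma one_le_sqrtA (t : ℝ) : 1 ≤ Real.sqrt (1 + t ^ 2) := by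
  rw [show (1:ℝ) = Real.sqrt 1 from Real.sqrt_one.symm]
  exact Real.sqrt_le_sqrt (by rw [Real.sqrt_one]; exact one_le_A t)

lemma rpow54 (A : ℝ) (hA : 0 < A) :
    A ^ ((5:ℝ)/4) = A * Real.sqrt (Real.sqrt A) := by
  rw [Real.sqrt_eq_rpow, Real.sqrt_eq_rpow, ← Real.rpow_mul hA.le,
    ← Real.rpow_one_add' (by positivity) (by norm_num : (1:ℝ) + 1/2 * (1/2) ≠ 0)]
  norm_num

lemma rpow32 (A : ℝ) (hA : 0 < A) :
    A ^ ((3:ℝ)/2) = A * Real.sqrt A := by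
  rw [Real.sqrt_eq_rpow, ← Real.rpow_one_add' (by positivity) (by norm_num : (1:ℝ) + 1/2 ≠ 0)]
  norm_num

lemma continuous_gfun : Continuous gfun := by
  apply Continuous.div
  · exact continuous_const.mul (((continuous_const.add (continuous_pow 2)).sqrt.sub
      continuous_const).sqrt)
  · exact (continuous_const.add (continuous_pow 2)).rpow_const (fun t => Or.inr (by norm_num))
  · intro t
    have : (0:ℝ) < (1 + t ^ 2) ^ ((5:ℝ)/4) := Real.rpow_pos_of_pos (by positivity) _
    exact this.ne'

lemma continuous_Ffun : Continuous Ffun :=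
  ((continuous_const.add (continuous_pow 2)).rpow_const
    (fun t => Or.inr (by norm_num))).mul
    (((continuous_const.add (continuous_pow 2)).sqrt.sub continuous_const).sqrt)

lemma Ffun_nonneg (t : ℝ) : 0 ≤ Ffun t := by
  unfold Ffun; positivity

lemma Ffun_mono {a b : ℝ} (h : a ^ 2 ≤ b ^ 2) : Ffun a ≤ Ffun b := by
  unfold Ffun
  have h1 : (1:ℝ) + a ^ 2 ≤ 1 + b ^ 2 := by linarith
  apply mul_le_mul
  · exact Real.rpow_le_rpow (by positivity) h1 (by norm_num)
  · exact Real.sqrt_le_sqrt (by have := Real.sqrt_le_sqrt h1; linarith)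
  · positivity
  · positivity

/-- Pointwise equipartition of energy along the ODE. -/
lemma pointwise_eq (d t : ℝ)
    (hode : d = (1 + t ^ 2) ^ ((5:ℝ)/4) * Real.sqrt (Real.sqrt (1 + t ^ 2) - 1)) :
    (d / (1 + t ^ 2) ^ ((3:ℝ)/2)) ^ 2 * Real.sqrt (1 + t ^ 2)
      + (Real.sqrt (1 + t ^ 2) - 1) = d * gfun t := by
  subst hode
  have hA : (0:ℝ) < 1 + t ^ 2 := by positivity
  rw [gfun, rpow54 _ hA, rpow32 _ hA]
  set s := Real.sqrt (1 + t ^ 2) with hsdef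
  have hs1 : 1 ≤ s := one_le_sqrtA t
  have hs2 : s ^ 2 = 1 + t ^ 2 := Real.sq_sqrt hA.le
  set r := Real.sqrt s with hrdef
  have hr2 : r ^ 2 = s := Real.sq_sqrt (by linarith)
  have hr0 : 0 < r := Real.sqrt_pos.2 (by linarith)
  set q := Real.sqrt (s - 1) with hqdef
  have hq2 : q ^ 2 = s - 1 := Real.sq_sqrt (by linarith)
  have hs0 : (0:ℝ) < s := by linarith
  rw [← hs2]
  field_simp
  linear_combination q^2*hr2 - s*hq2

/-- The explicit antiderivative of `gfun` on `[0,∞)`. -/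
lemma G_hasDeriv (y : ℝ) (hy : 0 ≤ y) :
    HasDerivAt (fun y : ℝ => 4 * Real.sqrt 2 - 4 * Real.sqrt (1 + (Real.sqrt (1 + y ^ 2))⁻¹))
      (gfun y) y := by
  have hA : (0:ℝ) < 1 + y ^ 2 := by positivity
  set s := Real.sqrt (1 + y ^ 2) with hsdef
  have hs1 : 1 ≤ s := one_le_sqrtA y
  have hs0 : (0:ℝ) < s := by linarith
  have hs2 : s ^ 2 = 1 + y ^ 2 := Real.sq_sqrt hA.le
  have h1 : HasDerivAt (fun y : ℝ => 1 + y ^ 2) (2 * y) y := by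
    simpa using (hasDerivAt_pow 2 y).const_add 1
  have h2 : HasDerivAt (fun y : ℝ => Real.sqrt (1 + y ^ 2)) (y / s) y := by
    have h := (Real.hasDerivAt_sqrt hA.ne').comp y h1
    refine h.congr_deriv (Eq.symm ?_)
    field_simp
    ring
  have h3 : HasDerivAt (fun y : ℝ => (Real.sqrt (1 + y ^ 2))⁻¹) (-(y / s) / s ^ 2) y := by
    have := h2.inv hs0.ne'
    exact this
  have h4 : HasDerivAt (fun y : ℝ => 1 + (Real.sqrt (1 + y ^ 2))⁻¹) (-(y / s) / s ^ 2) y :=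
    h3.const_add 1
  have hu : (0:ℝ) < 1 + s⁻¹ := by positivity
  have h5 : HasDerivAt (fun y : ℝ => Real.sqrt (1 + (Real.sqrt (1 + y ^ 2))⁻¹))
      (1 / (2 * Real.sqrt (1 + s⁻¹)) * (-(y / s) / s ^ 2)) y := by
    have h := (Real.hasDerivAt_sqrt hu.ne').comp y h4
    exact h
  have h6 := (h5.const_mul (4:ℝ)).const_sub (4 * Real.sqrt 2)
  refine h6.congr_deriv (Eq.symm ?_)
  rw [gfun, rpow54 _ hA, ← hsdef]
  have hkey1 : Real.sqrt (1 + s⁻¹) = Real.sqrt (s + 1) / Real.sqrt s := by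
    rw [show 1 + s⁻¹ = (s + 1) / s by field_simp, Real.sqrt_div (by linarith)]
  have hkey2 : Real.sqrt (s - 1) * Real.sqrt (s + 1) = y := by
    rw [← Real.sqrt_mul (by linarith) (s + 1), show (s - 1) * (s + 1) = y ^ 2 by nlinarith,
      Real.sqrt_sq hy]
  have hss : Real.sqrt s * Real.sqrt s = s := Real.mul_self_sqrt hs0.le
  have hsp : (0:ℝ) < Real.sqrt s := Real.sqrt_pos.2 hs0
  have hsp1 : (0:ℝ) < Real.sqrt (s + 1) := Real.sqrt_pos.2 (by linarith)
  rw [hkey1, ← hs2]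
  field_simp
  linear_combination (4*s)*hkey2 - (4*y)*hss

lemma ftan {θ : ℝ} (hθ : θ ∈ Ioo (0:ℝ) (π / 2)) :
    (∫ z in (0:ℝ)..Real.tan θ, gfun z) = 4 * (Real.sqrt 2 - Real.sqrt (1 + Real.cos θ)) := by
  have hcos : 0 < Real.cos θ := Real.cos_pos_of_mem_Ioo
    ⟨by linarith [hθ.1, Real.pi_pos], hθ.2⟩
  have htan : 0 < Real.tan θ := Real.tan_pos_of_pos_of_lt_pi_div_two hθ.1 hθ.2
  have hderiv : ∀ y ∈ uIcc (0:ℝ) (Real.tan θ),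
      HasDerivAt (fun y : ℝ => 4 * Real.sqrt 2 - 4 * Real.sqrt (1 + (Real.sqrt (1 + y ^ 2))⁻¹))
        (gfun y) y := by
    rw [uIcc_of_le htan.le]
    exact fun y hy => G_hasDeriv y hy.1
  rw [intervalIntegral.integral_eq_sub_of_hasDerivAt hderiv
    (continuous_gfun.intervalIntegrable _ _)]
  have h1 : (Real.sqrt (1 + Real.tan θ ^ 2))⁻¹ = Real.cos θ :=
    Real.inv_sqrt_one_add_tan_sq hcos
  rw [h1]
  norm_num [Real.sqrt_one]
  ring

/-- equipartition of energy along the profile ODE: for every `ε > 0`,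
`∫_{−ε^{−1/3}}^0 [κ_U²√(1+U'²) + (√(1+U'²) − 1)] dx = f(U'(0)) − f(U'(−ε^{−1/3}))`,
and this quantity converges to `4(√2 − √(1+cos θ))` as `ε ↓ 0`, where
`f(y) = ∫₀^y 2√(√(1+z²)−1)/(1+z²)^{5/4} dz`. -/
theorem equipartition_along_profile
    (θ : ℝ) (hθ : θ ∈ Ioo (0:ℝ) (π / 2))
    (U : ℝ → ℝ) (hU : IsProfileSol1 θ U)
    (f : ℝ → ℝ)
    (hf : ∀ y : ℝ, f y =
      ∫ z in (0:ℝ)..y, 2 * Real.sqrt (Real.sqrt (1 + z ^ 2) - 1) / (1 + z ^ 2) ^ ((5:ℝ)/4)) :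
    (∀ ε : ℝ, 0 < ε →
      (∫ x in (-(ε ^ (-(1:ℝ)/3)))..(0:ℝ),
        (deriv (deriv U) x / (1 + (deriv U x) ^ 2) ^ ((3:ℝ)/2)) ^ 2 *
            Real.sqrt (1 + (deriv U x) ^ 2)
          + (Real.sqrt (1 + (deriv U x) ^ 2) - 1))
        = f (deriv U 0) - f (deriv U (-(ε ^ (-(1:ℝ)/3))))) ∧
    Tendsto (fun ε : ℝ =>
      ∫ x in (-(ε ^ (-(1:ℝ)/3)))..(0:ℝ),
        (deriv (deriv U) x / (1 + (deriv U x) ^ 2) ^ ((3:ℝ)/2)) ^ 2 *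
            Real.sqrt (1 + (deriv U x) ^ 2)
          + (Real.sqrt (1 + (deriv U x) ^ 2) - 1))
      (nhdsWithin 0 (Ioi 0))
      (nhds (4 * (Real.sqrt 2 - Real.sqrt (1 + Real.cos θ)))) := by
  obtain ⟨hdiff, hU0, hU0', hode⟩ := hU
  have hgf : ∀ y : ℝ, f y = ∫ z in (0:ℝ)..y, gfun z := fun y => by rw [hf]; rfl
  have hd2 : ∀ x ≤ (0:ℝ), HasDerivAt (deriv U) (deriv (deriv U) x) x :=
    fun x hx => (hdiff x hx).2.hasDerivAt
  have hodeF : ∀ x ≤ (0:ℝ), deriv (deriv U) x = Ffun (deriv U x) := hode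
  have hcontp : ContinuousOn (deriv U) (Iic 0) :=
    fun x hx => ((hdiff x hx).2.continuousAt).continuousWithinAt
  -- Part 1: the integral identity for any lower endpoint `a ≤ 0`
  have key : ∀ a ≤ (0:ℝ),
      (∫ x in a..(0:ℝ),
        (deriv (deriv U) x / (1 + (deriv U x) ^ 2) ^ ((3:ℝ)/2)) ^ 2 *
            Real.sqrt (1 + (deriv U x) ^ 2)
          + (Real.sqrt (1 + (deriv U x) ^ 2) - 1))
        = f (deriv U 0) - f (deriv U a) := by
    intro a ha
    have huIcc : uIcc a (0:ℝ) = Icc a 0 := uIcc_of_le ha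
    have hmem : ∀ x ∈ uIcc a (0:ℝ), x ≤ 0 := by
      intro x hx; rw [huIcc] at hx; exact hx.2
    have hEq : EqOn
        (fun x => (deriv (deriv U) x / (1 + (deriv U x) ^ 2) ^ ((3:ℝ)/2)) ^ 2 *
            Real.sqrt (1 + (deriv U x) ^ 2) + (Real.sqrt (1 + (deriv U x) ^ 2) - 1))
        (fun x => deriv (deriv U) x * gfun (deriv U x)) (uIcc a (0:ℝ)) := by
      intro x hx
      exact pointwise_eq _ _ (hode x (hmem x hx))
    rw [intervalIntegral.integral_congr hEq]
    have hcsub : ContinuousOn (fun x => deriv (deriv U) x) (uIcc a (0:ℝ)) := by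
      apply ContinuousOn.congr
        (continuous_Ffun.comp_continuousOn (hcontp.mono (fun x hx => hmem x hx)))
      intro x hx
      exact hodeF x (hmem x hx)
    have hsubst := intervalIntegral.integral_comp_smul_deriv
      (f := deriv U) (f' := fun x => deriv (deriv U) x) (g := gfun)
      (fun x hx => hd2 x (hmem x hx)) hcsub continuous_gfun
    simp only [smul_eq_mul, Function.comp_apply] at hsubst
    rw [hsubst, hgf, hgf]
    exact (intervalIntegral.integral_interval_sub_left
      (continuous_gfun.intervalIntegrable _ _)
      (continuous_gfun.intervalIntegrable _ _)).symm
  have part1 : ∀ ε : ℝ, 0 < ε →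
      (∫ x in (-(ε ^ (-(1:ℝ)/3)))..(0:ℝ),
        (deriv (deriv U) x / (1 + (deriv U x) ^ 2) ^ ((3:ℝ)/2)) ^ 2 *
            Real.sqrt (1 + (deriv U x) ^ 2)
          + (Real.sqrt (1 + (deriv U x) ^ 2) - 1))
        = f (deriv U 0) - f (deriv U (-(ε ^ (-(1:ℝ)/3)))) := by
    intro ε hε
    exact key _ (neg_nonpos.2 (Real.rpow_pos_of_pos hε _).le)
  refine ⟨part1, ?_⟩
  -- Monotonicity of `deriv U` on `(-∞,0]`
  have hdiffOn : DifferentiableOn ℝ (deriv U) (interior (Iic (0:ℝ))) := by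
    rw [interior_Iic]
    exact fun x hx => ((hdiff x hx.le).2).differentiableWithinAt
  have hge0 : ∀ x ∈ interior (Iic (0:ℝ)), (0:ℝ) ≤ deriv (deriv U) x := by
    rw [interior_Iic]
    intro x hx
    rw [hodeF x hx.le]
    exact Ffun_nonneg _
  have hgrow0 := Convex.mul_sub_le_image_sub_of_le_deriv (convex_Iic (0:ℝ))
    hcontp hdiffOn hge0
  have hmono : ∀ x y : ℝ, x ≤ y → y ≤ 0 → deriv U x ≤ deriv U y := by
    intro x y hxy hy0
    have := hgrow0 x (mem_Iic.2 (hxy.trans hy0)) y (mem_Iic.2 hy0) hxy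
    simpa using this
  -- Nonnegativity of `deriv U` on `(-∞,0]`
  have hnonneg : ∀ x ≤ (0:ℝ), 0 ≤ deriv U x := by
    by_contra hcon
    push_neg at hcon
    obtain ⟨x₀, hx₀0, hneg⟩ := hcon
    set m := -deriv U x₀ with hm
    have hm0 : 0 < m := by simp only [hm]; linarith
    have hple : ∀ x ≤ x₀, deriv U x ≤ -m := by
      intro x hx
      have := hmono x x₀ hx hx₀0
      simp only [hm]; linarith
    set c := Real.sqrt (Real.sqrt (1 + m ^ 2) - 1) with hc
    have hc0 : 0 < c := by
      apply Real.sqrt_pos.2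
      rw [sub_pos]
      exact (Real.lt_sqrt (by norm_num)).2 (by nlinarith)
    set h : ℝ → ℝ := fun x => -(deriv U x)⁻¹ with hh
    have hhd : ∀ x ≤ x₀, HasDerivAt h (deriv (deriv U) x / (deriv U x) ^ 2) x := by
      intro x hx
      have hne : deriv U x ≠ 0 := by
        have := hple x hx; intro h0; rw [h0] at this; linarith
      have := ((hd2 x (hx.trans hx₀0)).inv hne).neg
      exact this.congr_deriv (by ring)
    have hcon' : ContinuousOn h (Iic x₀) :=
      fun x hx => ((hhd x hx).continuousAt).continuousWithinAt
    have hdiff' : DifferentiableOn ℝ h (interior (Iic x₀)) := by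
      rw [interior_Iic]
      exact fun x hx => (hhd x hx.le).differentiableAt.differentiableWithinAt
    have hge' : ∀ x ∈ interior (Iic x₀), c ≤ deriv h x := by
      rw [interior_Iic]
      intro x hx
      rw [(hhd x hx.le).deriv]
      have hx0 : x ≤ 0 := hx.le.trans hx₀0
      have hpx : deriv U x ≤ -m := hple x hx.le
      have hsq : m ^ 2 ≤ (deriv U x) ^ 2 := by nlinarith
      rw [hodeF x hx0, le_div_iff₀ (by nlinarith : (0:ℝ) < (deriv U x) ^ 2)]
      have h1 : (deriv U x) ^ 2 ≤ (1 + (deriv U x) ^ 2) ^ ((5:ℝ)/4) :=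
        calc (deriv U x) ^ 2 ≤ 1 + (deriv U x) ^ 2 := by linarith
        _ = (1 + (deriv U x) ^ 2) ^ ((1:ℝ)) := (Real.rpow_one _).symm
        _ ≤ _ := Real.rpow_le_rpow_of_exponent_le (one_le_A _) (by norm_num)
      have h2 : c ≤ Real.sqrt (Real.sqrt (1 + (deriv U x) ^ 2) - 1) := by
        apply Real.sqrt_le_sqrt
        have := Real.sqrt_le_sqrt (show 1 + m ^ 2 ≤ 1 + (deriv U x) ^ 2 by linarith)
        linarith
      calc c * (deriv U x) ^ 2
          ≤ Real.sqrt (Real.sqrt (1 + (deriv U x) ^ 2) - 1) *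
            ((1 + (deriv U x) ^ 2) ^ ((5:ℝ)/4)) :=
            mul_le_mul h2 h1 (by positivity) (Real.sqrt_nonneg _)
        _ = Ffun (deriv U x) := by rw [Ffun]; ring
    have hgrow' := Convex.mul_sub_le_image_sub_of_le_deriv (convex_Iic x₀)
      hcon' hdiff' hge'
    set x₁ := x₀ - (1/(m*c) + 1) with hx₁
    have hx₁le : x₁ ≤ x₀ := by
      rw [hx₁]
      have : 0 < 1/(m*c) + 1 := by positivity
      linarith
    have hineq := hgrow' x₁ (mem_Iic.2 hx₁le) x₀ (mem_Iic.2 le_rfl) hx₁le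
    have hhx₀ : h x₀ = m⁻¹ := by
      simp only [hh, hm, neg_neg, inv_neg]
    have hhx₁ : 0 < h x₁ := by
      have ht : deriv U x₁ < 0 := lt_of_le_of_lt (hple x₁ hx₁le) (by linarith)
      simp only [hh]
      exact neg_pos.2 (inv_lt_zero.2 ht)
    have hcx : c * (x₀ - x₁) = 1/m + c := by
      rw [hx₁]
      field_simp
      ring
    rw [hhx₀, hcx] at hineq
    rw [one_div] at hineq
    clear_value m c h x₁
    linarith
  -- deriv U gets small far to the left
  have hsmall : ∀ δ : ℝ, 0 < δ → ∃ x₀ ≤ (0:ℝ), deriv U x₀ < δ := by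
    intro δ hδ
    by_contra hcon
    push_neg at hcon
    set c := Ffun δ with hcdef
    have hc0 : 0 < c := by
      apply mul_pos (Real.rpow_pos_of_pos (by positivity) _)
      apply Real.sqrt_pos.2
      rw [sub_pos]
      exact (Real.lt_sqrt (by norm_num)).2 (by nlinarith)
    have hge' : ∀ x ∈ interior (Iic (0:ℝ)), c ≤ deriv (deriv U) x := by
      rw [interior_Iic]
      intro x hx
      rw [hodeF x hx.le, hcdef]
      apply Ffun_mono
      have := hcon x hx.le
      nlinarith
    have hgrow' := Convex.mul_sub_le_image_sub_of_le_deriv (convex_Iic (0:ℝ))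
      hcontp hdiffOn hge'
    have hp0 : 0 < deriv U 0 := by
      rw [hU0']
      exact Real.tan_pos_of_pos_of_lt_pi_div_two hθ.1 hθ.2
    set x₁ := -(deriv U 0 / c + 1) with hx₁
    have hx₁0 : x₁ ≤ 0 := by
      rw [hx₁]
      have : 0 < deriv U 0 / c + 1 := by positivity
      linarith
    have hineq := hgrow' x₁ (mem_Iic.2 hx₁0) 0 (mem_Iic.2 le_rfl) hx₁0
    have hδle : δ ≤ deriv U x₁ := hcon x₁ hx₁0
    have hcx : c * (0 - x₁) = deriv U 0 + c := by
      rw [hx₁]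
      field_simp
      ring
    rw [hcx] at hineq
    clear_value c x₁
    linarith
  -- the limit
  have htendP : Tendsto (deriv U) atBot (𝓝 0) := by
    rw [Metric.tendsto_nhds]
    intro δ hδ
    obtain ⟨x₀, hx₀0, hlt⟩ := hsmall δ hδ
    rw [eventually_atBot]
    refine ⟨x₀, fun x hx => ?_⟩
    rw [Real.dist_eq, sub_zero, abs_of_nonneg (hnonneg x (hx.trans hx₀0))]
    exact lt_of_le_of_lt (hmono x x₀ hx hx₀0) hlt
  have hnegt : Tendsto (fun ε : ℝ => -(ε ^ (-(1:ℝ)/3))) (𝓝[>] (0:ℝ)) atBot := by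
    have hc : Tendsto (fun ε : ℝ => ε ^ ((1:ℝ)/3)) (𝓝[>] (0:ℝ)) (𝓝[>] (0:ℝ)) := by
      apply tendsto_nhdsWithin_of_tendsto_nhds_of_eventually_within
      · have h : Tendsto (fun ε : ℝ => ε ^ ((1:ℝ)/3)) (𝓝 (0:ℝ)) (𝓝 (0:ℝ)) := by
          have h0 := (Real.continuousAt_rpow_const 0 ((1:ℝ)/3) (Or.inr (by norm_num))).tendsto
          simpa [Real.zero_rpow (by norm_num : ((1:ℝ)/3) ≠ 0)] using h0
        exact h.mono_left nhdsWithin_le_nhds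
      · filter_upwards [self_mem_nhdsWithin] with ε (hε : ε ∈ Ioi (0:ℝ))
        exact Real.rpow_pos_of_pos hε _
    have h1 : Tendsto (fun ε : ℝ => ε ^ (-(1:ℝ)/3)) (𝓝[>] (0:ℝ)) atTop := by
      apply (tendsto_inv_nhdsGT_zero.comp hc).congr'
      filter_upwards [self_mem_nhdsWithin] with ε (hε : ε ∈ Ioi (0:ℝ))
      simp only [Function.comp_apply]
      rw [show (-(1:ℝ)/3) = -((1:ℝ)/3) by norm_num, Real.rpow_neg (le_of_lt hε)]
    exact tendsto_neg_atTop_atBot.comp h1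
  have hfc : Continuous f := by
    have hfg : f = fun y => ∫ z in (0:ℝ)..y, gfun z := funext hgf
    rw [hfg]
    exact intervalIntegral.continuous_primitive
      (fun a b => continuous_gfun.intervalIntegrable a b) 0
  have hf0 : f 0 = 0 := by rw [hf]; exact intervalIntegral.integral_same
  have hcomp : Tendsto (fun ε : ℝ => f (deriv U (-(ε ^ (-(1:ℝ)/3))))) (𝓝[>] (0:ℝ)) (𝓝 0) := by
    have h := (hfc.continuousAt.tendsto).comp (htendP.comp hnegt)
    rw [hf0] at h
    exact h
  have hlim : Tendsto (fun ε : ℝ => f (deriv U 0) - f (deriv U (-(ε ^ (-(1:ℝ)/3)))))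
      (𝓝[>] (0:ℝ)) (𝓝 (f (deriv U 0))) := by
    have h : Tendsto (fun ε : ℝ => f (deriv U 0) - f (deriv U (-(ε ^ (-(1:ℝ)/3)))))
        (𝓝[>] (0:ℝ)) (𝓝 (f (deriv U 0) - 0)) := tendsto_const_nhds.sub hcomp
    rwa [sub_zero] at h
  have hft : f (deriv U 0) = 4 * (Real.sqrt 2 - Real.sqrt (1 + Real.cos θ)) := by
    rw [hU0', hgf]
    exact ftan hθ
  rw [← hft]
  apply hlim.congr'
  filter_upwards [self_mem_nhdsWithin] with ε (hε : ε ∈ Ioi (0:ℝ))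
  exact (part1 ε hε).symm
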